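/- Let q be a prime number. If A and B are q-element finite sets of natural numbers such that every natural number k with k < q^2 can be written uniquely as a + b with a ∈ A and b ∈ B, then either A = {0, 1, …, q−1} and B = {0, q, 2q, …, q(q−1)}, or A = {0, q, 2q, …, q(q−1)} and B = {0, 1, …, q−1}. In particular, up to swapping A and B there is exactly one solution. -/

import Mathlib

open Polynomial Finset

private lemma coeff_indicator (s : Finset ℕ) (n : ℕ) :
    (∑ a ∈ s, (X : ℚ[X]) ^ a).coeff n = if n ∈ s then 1 else 0 := by
  rw [Polynomial.finset_sum_coeff]
  simp [Polynomial.coeff_X_pow, Finset.sum_ite_eq]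

private lemma eq_of_sum_X_pow_eq {s t : Finset ℕ}
    (hst : (∑ a ∈ s, (X : ℚ[X]) ^ a) = ∑ a ∈ t, X ^ a) : s = t := by
  ext n
  have h := congrArg (fun p => Polynomial.coeff p n) hst
  simp only [coeff_indicator] at h
  by_cases hs : n ∈ s <;> by_cases ht : n ∈ t <;> simp_all

theorem prime_square_cell_unique_solution (q : ℕ) (hq : q.Prime)
    (A B : Finset ℕ) (hA : A.card = q) (hB : B.card = q)
    (h : ∀ k : ℕ, k < q^2 →
      ∃! p : ℕ × ℕ, p.1 ∈ A ∧ p.2 ∈ B ∧ p.1 + p.2 = k) :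
    (A = Finset.range q ∧ B = (Finset.range q).image (fun i => q * i)) ∨
    (A = (Finset.range q).image (fun i => q * i) ∧ B = Finset.range q) := by
  classical
  haveI : Fact q.Prime := ⟨hq⟩
  have hq2 : 2 ≤ q := hq.two_le
  have hq0 : 0 < q := hq.pos
  have hq20 : 0 < q ^ 2 := pow_pos hq0 2
  -- 0 ∈ A and 0 ∈ B
  obtain ⟨p0, ⟨hp0A, hp0B, hp0s⟩, -⟩ := h 0 hq20
  obtain ⟨h1, h2⟩ := Nat.add_eq_zero.mp hp0s
  have h0A : (0 : ℕ) ∈ A := h1 ▸ hp0A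
  have h0B : (0 : ℕ) ∈ B := h2 ▸ hp0B
  -- both sets have a nonzero element
  have hex : ∀ s : Finset ℕ, s.card = q → ∃ x ∈ s, x ≠ 0 := by
    intro s hs
    obtain ⟨a, ha, b, hb, hab⟩ := Finset.one_lt_card.mp (show 1 < s.card by omega)
    rcases eq_or_ne a 0 with rfl | hne
    · exact ⟨b, hb, fun hb0 => hab hb0.symm⟩
    · exact ⟨a, ha, hne⟩
  obtain ⟨a₀, ha₀, ha₀0⟩ := hex A hA
  obtain ⟨b₀, hb₀, hb₀0⟩ := hex B hB
  -- the chooser function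
  set g : ℕ → ℕ × ℕ := fun k => if hk : k < q ^ 2 then (h k hk).choose else (0, 0) with hgdef
  have hgmem : ∀ k, k < q ^ 2 → (g k).1 ∈ A ∧ (g k).2 ∈ B ∧ (g k).1 + (g k).2 = k := by
    intro k hk
    simp only [hgdef, dif_pos hk]
    exact (h k hk).choose_spec.1
  -- all sums a + b are < q^2
  have hT : (A ×ˢ B).filter (fun p => p.1 + p.2 < q ^ 2) = A ×ˢ B := by
    refine Finset.eq_of_subset_of_card_le (Finset.filter_subset _ _) ?_
    have hle : (Finset.range (q ^ 2)).card ≤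
        ((A ×ˢ B).filter (fun p => p.1 + p.2 < q ^ 2)).card := by
      apply Finset.card_le_card_of_injOn g
      · intro k hk
        rw [Finset.coe_range, Set.mem_Iio] at hk
        obtain ⟨hg1, hg2, hg3⟩ := hgmem k hk
        simp only [Finset.mem_coe, Finset.mem_filter, Finset.mem_product]
        exact ⟨⟨hg1, hg2⟩, by rw [hg3]; exact hk⟩
      · intro k hk k' hk' hkk
        rw [Finset.coe_range, Set.mem_Iio] at hk hk'
        have e1 := (hgmem k hk).2.2
        have e2 := (hgmem k' hk').2.2
        rw [← e1, ← e2, hkk]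
    rw [Finset.card_range] at hle
    rwa [Finset.card_product, hA, hB, ← pow_two]
  have hlt : ∀ a ∈ A, ∀ b ∈ B, a + b < q ^ 2 := by
    intro a ha b hb
    have : (a, b) ∈ (A ×ˢ B).filter (fun p => p.1 + p.2 < q ^ 2) := by
      rw [hT]; exact Finset.mem_product.mpr ⟨ha, hb⟩
    exact (Finset.mem_filter.mp this).2
  -- the polynomials
  set P : ℚ[X] := ∑ a ∈ A, X ^ a with hPdef
  set Q : ℚ[X] := ∑ b ∈ B, X ^ b with hQdef
  set G : ℚ[X] := ∑ i ∈ Finset.range q, X ^ i with hGdef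
  set H : ℚ[X] := ∑ i ∈ Finset.range q, X ^ (q * i) with hHdef
  have hPQ : P * Q = ∑ k ∈ Finset.range (q ^ 2), X ^ k := by
    rw [hPdef, hQdef, Finset.sum_mul_sum]
    rw [← Finset.sum_product']
    refine Finset.sum_bij (fun p _ => p.1 + p.2) ?_ ?_ ?_ ?_
    · intro p hp
      rw [Finset.mem_product] at hp
      exact Finset.mem_range.mpr (hlt _ hp.1 _ hp.2)
    · intro p hp p' hp' hsum
      rw [Finset.mem_product] at hp hp'
      have hk : p.1 + p.2 < q ^ 2 := hlt _ hp.1 _ hp.2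
      obtain ⟨w, -, hu⟩ := h (p.1 + p.2) hk
      exact (hu p ⟨hp.1, hp.2, rfl⟩).trans (hu p' ⟨hp'.1, hp'.2, hsum.symm⟩).symm
    · intro k hk
      rw [Finset.mem_range] at hk
      obtain ⟨hg1, hg2, hg3⟩ := hgmem k hk
      exact ⟨g k, Finset.mem_product.mpr ⟨hg1, hg2⟩, hg3⟩
    · intro p hp
      rw [← pow_add]
  have hGH : G * H = ∑ k ∈ Finset.range (q ^ 2), X ^ k := by
    rw [hGdef, hHdef, Finset.sum_mul_sum]
    rw [← Finset.sum_product']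
    refine Finset.sum_bij (fun p _ => p.1 + q * p.2) ?_ ?_ ?_ ?_
    · intro p hp
      rw [Finset.mem_product, Finset.mem_range, Finset.mem_range] at hp
      rw [Finset.mem_range, pow_two]
      have hmul : q * (p.2 + 1) ≤ q * q := Nat.mul_le_mul_left q (by omega)
      rw [Nat.mul_add, mul_one] at hmul
      omega
    · intro p hp p' hp' hsum
      rw [Finset.mem_product, Finset.mem_range, Finset.mem_range] at hp hp'
      have e1 : p.1 = (p.1 + q * p.2) % q := by
        rw [Nat.add_mul_mod_self_left, Nat.mod_eq_of_lt hp.1]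
      have e2 : p'.1 = (p'.1 + q * p'.2) % q := by
        rw [Nat.add_mul_mod_self_left, Nat.mod_eq_of_lt hp'.1]
      have h1 : p.1 = p'.1 := by rw [e1, e2, hsum]
      have h2 : p.2 = p'.2 := by
        have := hsum
        rw [h1] at this
        exact Nat.eq_of_mul_eq_mul_left hq0 (by omega)
      exact Prod.ext h1 h2
    · intro k hk
      rw [Finset.mem_range, pow_two] at hk
      refine ⟨(k % q, k / q), ?_, ?_⟩
      · rw [Finset.mem_product, Finset.mem_range, Finset.mem_range]
        exact ⟨Nat.mod_lt _ hq0, Nat.div_lt_of_lt_mul (by rwa [mul_comm])⟩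
      · simp [Nat.mod_add_div]
    · intro p hp
      rw [← pow_add]
  -- G and H are the cyclotomic polynomials, hence irreducible
  have hGc : G = Polynomial.cyclotomic q ℚ := (Polynomial.cyclotomic_prime ℚ q).symm
  have hHc : H = Polynomial.cyclotomic (q ^ 2) ℚ := by
    rw [show q ^ 2 = q ^ (1 + 1) by ring, Polynomial.cyclotomic_prime_pow_eq_geom_sum hq]
    simp [← pow_mul]
    exact hHdef
  have hGirr : Irreducible G := hGc ▸ Polynomial.cyclotomic.irreducible_rat hq0
  have hHirr : Irreducible H := hHc ▸ Polynomial.cyclotomic.irreducible_rat hq20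
  have hGne : G ≠ 0 := hGirr.ne_zero
  -- coefficient facts
  have hPc0 : P.coeff 0 = 1 := by rw [hPdef, coeff_indicator, if_pos h0A]
  have hQc0 : Q.coeff 0 = 1 := by rw [hQdef, coeff_indicator, if_pos h0B]
  have hGc0 : G.coeff 0 = 1 := by
    rw [hGdef, coeff_indicator, if_pos (Finset.mem_range.mpr hq0)]
  have hPne : P ≠ 0 := fun hc => by simp [hc] at hPc0
  have hQne : Q ≠ 0 := fun hc => by simp [hc] at hQc0
  have hPnu : ¬ IsUnit P := by
    intro hu
    obtain ⟨c, -, hc⟩ := Polynomial.isUnit_iff.mp hu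
    have := congrArg (fun p => Polynomial.coeff p a₀) hc
    simp only [hPdef, coeff_indicator, if_pos ha₀, Polynomial.coeff_C,
      if_neg ha₀0] at this
    exact one_ne_zero this.symm
  have hQnu : ¬ IsUnit Q := by
    intro hu
    obtain ⟨c, -, hc⟩ := Polynomial.isUnit_iff.mp hu
    have := congrArg (fun p => Polynomial.coeff p b₀) hc
    simp only [hQdef, coeff_indicator, if_pos hb₀, Polynomial.coeff_C,
      if_neg hb₀0] at this
    exact one_ne_zero this.symm
  have hGprime : Prime G := hGirr.prime
  have hdvd : G ∣ P ∨ G ∣ Q := hGprime.2.2 P Q ⟨H, by rw [hPQ, hGH]⟩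
  -- helper: H as a sum over the image
  have hHimg : H = ∑ m ∈ (Finset.range q).image (fun i => q * i), X ^ m := by
    rw [hHdef, Finset.sum_image (fun x _ y _ hxy => Nat.eq_of_mul_eq_mul_left hq0 hxy)]
  rcases hdvd with ⟨R, hR⟩ | ⟨R, hR⟩
  · -- G ∣ P : left disjunct
    have hcan : R * Q = H := by
      apply mul_left_cancel₀ hGne
      rw [← mul_assoc, ← hR, hPQ, hGH]
    rcases hHirr.isUnit_or_isUnit hcan.symm with hu | hu
    · -- R is a unit, so P = G
      obtain ⟨c, -, hc⟩ := Polynomial.isUnit_iff.mp hu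
      have hcoeff := congrArg (fun p => Polynomial.coeff p 0) hR
      rw [← hc] at hR
      simp only [hPc0, ← hc, Polynomial.coeff_mul_C, hGc0, one_mul] at hcoeff
      have hPG : P = G := by rw [hR, ← hcoeff, map_one, mul_one]
      have hQH : Q = H := by
        apply mul_left_cancel₀ hPne
        rw [hPQ, ← hGH, hPG]
      left
      constructor
      · exact eq_of_sum_X_pow_eq (hPdef ▸ hPG)
      · exact eq_of_sum_X_pow_eq (hQdef ▸ (hQH.trans hHimg))
    · exact absurd hu hQnu
  · -- G ∣ Q : right disjunct
    have hcan : R * P = H := by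
      apply mul_left_cancel₀ hGne
      calc G * (R * P) = P * (G * R) := by ring
        _ = P * Q := by rw [← hR]
        _ = ∑ k ∈ Finset.range (q ^ 2), X ^ k := hPQ
        _ = G * H := hGH.symm
    rcases hHirr.isUnit_or_isUnit hcan.symm with hu | hu
    · -- R is a unit, so Q = G
      obtain ⟨c, -, hc⟩ := Polynomial.isUnit_iff.mp hu
      have hcoeff := congrArg (fun p => Polynomial.coeff p 0) hR
      rw [← hc] at hR
      simp only [hQc0, ← hc, Polynomial.coeff_mul_C, hGc0, one_mul] at hcoeff
      have hQG : Q = G := by rw [hR, ← hcoeff, map_one, mul_one]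
      have hPH : P = H := by
        apply mul_right_cancel₀ hQne
        rw [hPQ, ← hGH, hQG, mul_comm]
      right
      constructor
      · exact eq_of_sum_X_pow_eq (hPdef ▸ (hPH.trans hHimg))
      · exact eq_of_sum_X_pow_eq (hQdef ▸ hQG)
    · exact absurd hu hPnu
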